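/- Let p be the unique zero of the vector field g(·,0) in [0,∞)³. Then every differentiable solution x : [0,∞) → ℝ³ of x'(t) = g(x(t), 0) with x(0) ∈ B converges to p as t → ∞. -/

import Mathlib

open Set Real Filter
open Topology


/-- If `f` has positive derivative at `T`, then just before `T` the values are smaller. -/
lemma aux_lt_left_of_deriv_pos {f : ℝ → ℝ} {v T : ℝ} (hf : HasDerivAt f v T) (hv : 0 < v) :
    ∀ᶠ t in nhdsWithin T (Iio T), f t < f T := by
  have h := hasDerivAt_iff_tendsto_slope.1 hf
  have h2 : ∀ᶠ t in nhdsWithin T {T}ᶜ, 0 < slope f T t :=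
    h.eventually (eventually_gt_nhds hv)
  have hle : nhdsWithin T (Iio T) ≤ nhdsWithin T {T}ᶜ :=
    nhdsWithin_mono T (fun t ht => ne_of_lt ht)
  filter_upwards [hle h2, self_mem_nhdsWithin] with t ht ht'
  rw [slope_def_field] at ht
  rcases div_pos_iff.1 ht with ⟨h1, h2⟩ | ⟨h1, h2⟩
  · exfalso; have : t - T < 0 := sub_neg.2 ht'; linarith
  · linarith

/-- If `f` has negative derivative at `T`, then just before `T` the values are larger. -/
lemma aux_gt_left_of_deriv_neg {f : ℝ → ℝ} {v T : ℝ} (hf : HasDerivAt f v T) (hv : v < 0) :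
    ∀ᶠ t in nhdsWithin T (Iio T), f T < f t := by
  have := aux_lt_left_of_deriv_pos hf.neg (by linarith : (0:ℝ) < -v)
  filter_upwards [this] with t ht
  simpa using ht

/-- If `f` has positive derivative at `T`, then just after `T` the values are larger. -/
lemma aux_gt_right_of_deriv_pos {f : ℝ → ℝ} {v T : ℝ} (hf : HasDerivAt f v T) (hv : 0 < v) :
    ∀ᶠ t in nhdsWithin T (Ioi T), f T < f t := by
  have h := hasDerivAt_iff_tendsto_slope.1 hf
  have h2 : ∀ᶠ t in nhdsWithin T {T}ᶜ, 0 < slope f T t :=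
    h.eventually (eventually_gt_nhds hv)
  have hle : nhdsWithin T (Ioi T) ≤ nhdsWithin T {T}ᶜ :=
    nhdsWithin_mono T (fun t ht => ne_of_gt ht)
  filter_upwards [hle h2, self_mem_nhdsWithin] with t ht ht'
  rw [slope_def_field] at ht
  rcases div_pos_iff.1 ht with ⟨h1, h2⟩ | ⟨h1, h2⟩
  · linarith
  · exfalso; have : 0 < t - T := sub_pos.2 ht'; linarith

/-- If `f` has negative derivative at `T`, then just after `T` the values are smaller. -/
lemma aux_lt_right_of_deriv_neg {f : ℝ → ℝ} {v T : ℝ} (hf : HasDerivAt f v T) (hv : v < 0) :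
    ∀ᶠ t in nhdsWithin T (Ioi T), f t < f T := by
  have := aux_gt_right_of_deriv_pos hf.neg (by linarith : (0:ℝ) < -v)
  filter_upwards [this] with t ht
  simpa using ht

/-- Fluctuation lemma: arbitrarily late times where `f` is near the level `L` and the
derivative is small. -/
lemma aux_fluct {f D : ℝ → ℝ} {L : ℝ}
    (hf : ∀ t ≥ (0:ℝ), HasDerivAt f (D t) t)
    (hub : ∀ ε > (0:ℝ), ∀ᶠ t in atTop, f t < L + ε)
    (hfreq : ∀ ε > (0:ℝ), ∃ᶠ t in atTop, L - ε < f t) :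
    ∀ ε > (0:ℝ), ∀ T : ℝ, ∃ s, T ≤ s ∧ 0 ≤ s ∧ |D s| ≤ ε ∧ |f s - L| ≤ ε := by
  intro ε hε T
  obtain ⟨T₁, hT₁⟩ := eventually_atTop.1 (hub ε hε)
  set T₂ : ℝ := max (max T T₁) 0 + 3 with hT₂
  obtain ⟨t₀, ht₀T₂, ht₀⟩ := (frequently_atTop.1 (hfreq ε hε)) T₂
  have ht₀0 : (0:ℝ) ≤ t₀ := le_trans (by simp [hT₂]; linarith [le_max_right (max T T₁) (0:ℝ)]) ht₀T₂
  have ht₀T : T ≤ t₀ - 3 := by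
    have : T ≤ max (max T T₁) 0 := le_trans (le_max_left T T₁) (le_max_left _ _)
    simp only [hT₂] at ht₀T₂; linarith
  have ht₀T₁ : T₁ ≤ t₀ - 3 := by
    have : T₁ ≤ max (max T T₁) 0 := le_trans (le_max_right T T₁) (le_max_left _ _)
    simp only [hT₂] at ht₀T₂; linarith
  have ht₀3 : (3:ℝ) ≤ t₀ := by
    have : (0:ℝ) ≤ max (max T T₁) 0 := le_max_right _ _
    simp only [hT₂] at ht₀T₂; linarith
  have hft₀ : f t₀ < L + ε := hT₁ t₀ (by linarith)
  by_cases hD : |D t₀| ≤ ε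
  · exact ⟨t₀, by linarith, ht₀0, hD, abs_le.2 ⟨by linarith, by linarith⟩⟩
  push_neg at hD
  rcases lt_abs.1 hD with hDpos | hDneg
  · -- D t₀ > ε : look to the right with tilted function
    set g : ℝ → ℝ := fun t => f t - ε * (t - t₀) with hg
    have hgderiv : ∀ u, 0 ≤ u → HasDerivAt g (D u - ε) u := by
      intro u hu
      have h2 : HasDerivAt (fun t : ℝ => ε * (t - t₀)) ε u := by
        simpa using ((hasDerivAt_id u).sub_const t₀).const_mul ε
      exact (hf u hu).sub h2
    have hgcont : ContinuousOn g (Icc t₀ (t₀ + 3)) := fun u hu =>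
      ((hgderiv u (le_trans ht₀0 hu.1)).continuousAt).continuousWithinAt
    obtain ⟨τ, hτK, hτmax⟩ := isCompact_Icc.exists_isMaxOn
      (nonempty_Icc.2 (by linarith)) hgcont
    have hgt₀ : g t₀ = f t₀ := by simp [hg]
    have hmaxval : g t₀ ≤ g τ := hτmax (left_mem_Icc.2 (by linarith))
    have hτne3 : τ ≠ t₀ + 3 := by
      intro hcon
      have : g (t₀ + 3) = f (t₀ + 3) - 3 * ε := by simp [hg]; ring
      have h4 : f (t₀ + 3) < L + ε := hT₁ _ (by linarith)
      rw [hcon, this] at hmaxval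
      rw [hgt₀] at hmaxval
      linarith
    have hτnet₀ : τ ≠ t₀ := by
      intro hcon
      have hloc := aux_gt_right_of_deriv_pos (hgderiv t₀ ht₀0) (by linarith : 0 < D t₀ - ε)
      have hIoo : Ioo t₀ (t₀ + 3) ∈ nhdsWithin t₀ (Ioi t₀) :=
        Ioo_mem_nhdsGT_of_mem ⟨le_refl _, by linarith⟩
      obtain ⟨t, ht, htmem⟩ := (hloc.and (eventually_of_mem hIoo fun t ht => ht)).exists
      have : g t ≤ g τ := hτmax ⟨le_of_lt htmem.1, le_of_lt htmem.2⟩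
      rw [hcon] at this; linarith
    have hτint : τ ∈ Ioo t₀ (t₀ + 3) :=
      ⟨lt_of_le_of_ne hτK.1 (Ne.symm hτnet₀), lt_of_le_of_ne hτK.2 hτne3⟩
    have hlocmax : IsLocalMax g τ := hτmax.isLocalMax (Icc_mem_nhds hτint.1 hτint.2)
    have hderiv0 : D τ - ε = 0 :=
      hlocmax.hasDerivAt_eq_zero (hgderiv τ (by linarith [hτint.1]))
    have hfτ : f t₀ ≤ f τ := by
      have : f t₀ ≤ f τ - ε * (τ - t₀) := by rw [← hgt₀]; exact hmaxval
      nlinarith [hτint.1, hε]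
    have hfτub : f τ < L + ε := hT₁ τ (by linarith [hτint.1])
    exact ⟨τ, by linarith [hτint.1], by linarith [hτint.1],
      by rw [abs_of_nonneg (by linarith : 0 ≤ D τ)]; linarith,
      abs_le.2 ⟨by linarith, by linarith⟩⟩
  · -- D t₀ < -ε : look to the left
    set g : ℝ → ℝ := fun t => f t + ε * (t - t₀) with hg
    have hgderiv : ∀ u, 0 ≤ u → HasDerivAt g (D u + ε) u := by
      intro u hu
      have h2 : HasDerivAt (fun t : ℝ => ε * (t - t₀)) ε u := by
        simpa using ((hasDerivAt_id u).sub_const t₀).const_mul ε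
      exact (hf u hu).add h2
    have hgcont : ContinuousOn g (Icc (t₀ - 3) t₀) := fun u hu =>
      ((hgderiv u (by linarith [hu.1])).continuousAt).continuousWithinAt
    obtain ⟨τ, hτK, hτmax⟩ := isCompact_Icc.exists_isMaxOn
      (nonempty_Icc.2 (by linarith)) hgcont
    have hgt₀ : g t₀ = f t₀ := by simp [hg]
    have hmaxval : g t₀ ≤ g τ := hτmax (right_mem_Icc.2 (by linarith))
    have hτne3 : τ ≠ t₀ - 3 := by
      intro hcon
      have hval : g (t₀ - 3) = f (t₀ - 3) - 3 * ε := by simp [hg]; ring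
      have h4 : f (t₀ - 3) < L + ε := hT₁ _ (by linarith)
      rw [hcon, hval, hgt₀] at hmaxval
      linarith
    have hτnet₀ : τ ≠ t₀ := by
      intro hcon
      have hloc := aux_gt_left_of_deriv_neg (hgderiv t₀ ht₀0) (by linarith : D t₀ + ε < 0)
      have hIoo : Ioo (t₀ - 3) t₀ ∈ nhdsWithin t₀ (Iio t₀) :=
        Ioo_mem_nhdsLT_of_mem ⟨by linarith, le_refl _⟩
      obtain ⟨t, ht, htmem⟩ := (hloc.and (eventually_of_mem hIoo fun t ht => ht)).exists
      have : g t ≤ g τ := hτmax ⟨le_of_lt htmem.1, le_of_lt htmem.2⟩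
      rw [hcon] at this; linarith
    have hτint : τ ∈ Ioo (t₀ - 3) t₀ :=
      ⟨lt_of_le_of_ne hτK.1 (Ne.symm hτne3), lt_of_le_of_ne hτK.2 hτnet₀⟩
    have hlocmax : IsLocalMax g τ := hτmax.isLocalMax (Icc_mem_nhds hτint.1 hτint.2)
    have hτ0 : (0:ℝ) ≤ τ := by linarith [hτint.1]
    have hderiv0 : D τ + ε = 0 := hlocmax.hasDerivAt_eq_zero (hgderiv τ hτ0)
    have hfτ : f t₀ ≤ f τ := by
      have : f t₀ ≤ f τ + ε * (τ - t₀) := by rw [← hgt₀]; exact hmaxval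
      nlinarith [hτint.2, hε]
    have hfτub : f τ < L + ε := hT₁ τ (by linarith [hτint.1])
    exact ⟨τ, by linarith [hτint.1], hτ0,
      by rw [abs_of_nonpos (by linarith : D τ ≤ 0)]; linarith,
      abs_le.2 ⟨by linarith, by linarith⟩⟩

lemma aux_squeeze {a : ℕ → ℝ} {c : ℝ} (h : ∀ n : ℕ, |a n - c| ≤ 1/((n:ℝ)+1)) :
    Tendsto a atTop (𝓝 c) := by
  have h0 : Tendsto (fun n : ℕ => 1/((n:ℝ)+1)) atTop (𝓝 0) :=
    tendsto_one_div_add_atTop_nhds_zero_nat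
  have hlo : Tendsto (fun n : ℕ => c - 1/((n:ℝ)+1)) atTop (𝓝 c) := by
    simpa using (tendsto_const_nhds (x := c)).sub h0
  have hhi : Tendsto (fun n : ℕ => c + 1/((n:ℝ)+1)) atTop (𝓝 c) := by
    simpa using (tendsto_const_nhds (x := c)).add h0
  refine tendsto_of_tendsto_of_tendsto_of_le_of_le hlo hhi ?_ ?_
  · intro n; have := abs_le.1 (h n); linarith [this.1]
  · intro n; have := abs_le.1 (h n); linarith [this.2]

lemma aux_fluct_seq {f D : ℝ → ℝ} {L : ℝ}
    (hf : ∀ t ≥ (0:ℝ), HasDerivAt f (D t) t)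
    (hub : ∀ ε > (0:ℝ), ∀ᶠ t in atTop, f t < L + ε)
    (hfreq : ∀ ε > (0:ℝ), ∃ᶠ t in atTop, L - ε < f t) :
    ∃ u : ℕ → ℝ, Tendsto u atTop atTop ∧
      Tendsto (fun n => f (u n)) atTop (𝓝 L) ∧
      Tendsto (fun n => D (u n)) atTop (𝓝 0) ∧ (∀ n, 0 ≤ u n) := by
  have h := aux_fluct hf hub hfreq
  choose s hs1 hs2 hs3 hs4 using fun n : ℕ => h (1/((n:ℝ)+1)) (by positivity) (n : ℝ)
  refine ⟨s, tendsto_atTop_mono hs1 tendsto_natCast_atTop_atTop, aux_squeeze hs4, ?_, hs2⟩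
  have : ∀ n : ℕ, |D (s n) - 0| ≤ 1/((n:ℝ)+1) := by simpa using hs3
  exact aux_squeeze this

lemma aux_fluct_seq_limsup {f D : ℝ → ℝ}
    (hf : ∀ t ≥ (0:ℝ), HasDerivAt f (D t) t)
    (hbdd : IsBoundedUnder (· ≤ ·) atTop f) (hcobdd : IsBoundedUnder (· ≥ ·) atTop f) :
    ∃ u : ℕ → ℝ, Tendsto u atTop atTop ∧
      Tendsto (fun n => f (u n)) atTop (𝓝 (limsup f atTop)) ∧
      Tendsto (fun n => D (u n)) atTop (𝓝 0) ∧ (∀ n, 0 ≤ u n) :=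
  aux_fluct_seq hf
    (fun ε hε => eventually_lt_of_limsup_lt (by linarith) hbdd)
    (fun ε hε => frequently_lt_of_lt_limsup hcobdd.isCoboundedUnder_le (by linarith))

lemma aux_fluct_seq_liminf {f D : ℝ → ℝ}
    (hf : ∀ t ≥ (0:ℝ), HasDerivAt f (D t) t)
    (hbdd : IsBoundedUnder (· ≤ ·) atTop f) (hcobdd : IsBoundedUnder (· ≥ ·) atTop f) :
    ∃ u : ℕ → ℝ, Tendsto u atTop atTop ∧
      Tendsto (fun n => f (u n)) atTop (𝓝 (liminf f atTop)) ∧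
      Tendsto (fun n => D (u n)) atTop (𝓝 0) ∧ (∀ n, 0 ≤ u n) := by
  have hf' : ∀ t ≥ (0:ℝ), HasDerivAt (fun s => -f s) (-D t) t := fun t ht => (hf t ht).neg
  obtain ⟨u, h1, h2, h3, h4⟩ := aux_fluct_seq (L := -liminf f atTop) hf'
    (fun ε hε => by
      have := eventually_lt_of_lt_liminf
        (show liminf f atTop - ε < liminf f atTop by linarith) hcobdd
      filter_upwards [this] with t ht
      linarith)
    (fun ε hε => by
      have := frequently_lt_of_liminf_lt hbdd.isCoboundedUnder_ge
        (show liminf f atTop < liminf f atTop + ε by linarith)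
      exact this.mono fun t ht => by linarith)
  refine ⟨u, h1, ?_, by simpa using h3.neg, h4⟩
  have := h2.neg
  simpa using this

/-- Forward invariance of an open box for a planar system, by a first-exit argument. -/
lemma aux_invariance {f1 f2 D1 D2 : ℝ → ℝ} {l1 u1 l2 u2 : ℝ}
    (hf1 : ∀ t ≥ (0:ℝ), HasDerivAt f1 (D1 t) t)
    (hf2 : ∀ t ≥ (0:ℝ), HasDerivAt f2 (D2 t) t)
    (h01 : l1 < f1 0) (h02 : f1 0 < u1) (h03 : l2 < f2 0) (h04 : f2 0 < u2)
    (hl1 : ∀ t ≥ (0:ℝ), f1 t = l1 → l2 ≤ f2 t → f2 t ≤ u2 → 0 < D1 t)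
    (hu1 : ∀ t ≥ (0:ℝ), f1 t = u1 → l2 ≤ f2 t → f2 t ≤ u2 → D1 t < 0)
    (hl2 : ∀ t ≥ (0:ℝ), f2 t = l2 → l1 ≤ f1 t → f1 t ≤ u1 → 0 < D2 t)
    (hu2 : ∀ t ≥ (0:ℝ), f2 t = u2 → l1 ≤ f1 t → f1 t ≤ u1 → D2 t < 0) :
    ∀ t ≥ (0:ℝ), l1 < f1 t ∧ f1 t < u1 ∧ l2 < f2 t ∧ f2 t < u2 := by
  set φ : ℝ → ℝ := fun t => min (min (f1 t - l1) (u1 - f1 t)) (min (f2 t - l2) (u2 - f2 t))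
    with hφ
  have key : ∀ t ≥ (0:ℝ), 0 < φ t := by
    by_contra hcon
    push_neg at hcon
    obtain ⟨t₁, ht₁0, ht₁⟩ := hcon
    set S : Set ℝ := {t | 0 ≤ t ∧ φ t ≤ 0} with hS
    have hcont : ∀ t ≥ (0:ℝ), ContinuousAt φ t := by
      intro t ht
      have c1 : ContinuousAt f1 t := (hf1 t ht).continuousAt
      have c2 : ContinuousAt f2 t := (hf2 t ht).continuousAt
      exact ((c1.sub continuousAt_const).min (continuousAt_const.sub c1)).min
        ((c2.sub continuousAt_const).min (continuousAt_const.sub c2))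
    have hSclosed : IsClosed S := by
      have : S = Ici 0 ∩ {t ∈ Ici (0:ℝ) | φ t ∈ Iic 0} := by
        ext t
        simp only [hS, Set.mem_setOf_eq, mem_inter_iff, mem_Ici, Set.mem_sep_iff, mem_Iic]
        tauto
      rw [this]
      exact (isClosed_Ici).inter
        ((continuousOn_of_forall_continuousAt
          (fun t ht => hcont t ht)).preimage_isClosed_of_isClosed isClosed_Ici isClosed_Iic)
    have hSne : S.Nonempty := ⟨t₁, ht₁0, ht₁⟩
    have hSbdd : BddBelow S := ⟨0, fun y hy => hy.1⟩
    set T := sInf S with hT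
    have hTS : T ∈ S := hSclosed.csInf_mem hSne hSbdd
    have hT0 : 0 ≤ T := hTS.1
    have hφ0 : 0 < φ 0 := by
      simp only [hφ, lt_min_iff]
      refine ⟨⟨by linarith, by linarith⟩, by linarith, by linarith⟩
    have hTpos : 0 < T := by
      rcases lt_or_eq_of_le hT0 with h | h
      · exact h
      · exfalso
        have h2 := hTS.2
        rw [← h] at h2
        linarith
    have hbefore : ∀ t, 0 ≤ t → t < T → 0 < φ t := by
      intro t h0t htT
      by_contra hc
      push_neg at hc
      have : T ≤ t := csInf_le hSbdd ⟨h0t, hc⟩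
      linarith
    have hev : ∀ᶠ t in nhdsWithin T (Iio T), 0 < φ t := by
      have hmem : Ioo 0 T ∈ nhdsWithin T (Iio T) :=
        Ioo_mem_nhdsLT_of_mem ⟨hTpos, le_refl T⟩
      filter_upwards [hmem] with t ht
      exact hbefore t (le_of_lt ht.1) ht.2
    have hf1T : Tendsto f1 (nhdsWithin T (Iio T)) (𝓝 (f1 T)) :=
      ((hf1 T hT0).continuousAt).continuousWithinAt
    have hf2T : Tendsto f2 (nhdsWithin T (Iio T)) (𝓝 (f2 T)) :=
      ((hf2 T hT0).continuousAt).continuousWithinAt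
    have hl1T : l1 ≤ f1 T := by
      refine ge_of_tendsto hf1T ?_
      filter_upwards [hev] with t ht
      have := (lt_min_iff.1 ht).1
      have := (lt_min_iff.1 this).1
      linarith
    have hu1T : f1 T ≤ u1 := by
      refine le_of_tendsto hf1T ?_
      filter_upwards [hev] with t ht
      have := (lt_min_iff.1 ht).1
      have := (lt_min_iff.1 this).2
      linarith
    have hl2T : l2 ≤ f2 T := by
      refine ge_of_tendsto hf2T ?_
      filter_upwards [hev] with t ht
      have := (lt_min_iff.1 ht).2
      have := (lt_min_iff.1 this).1
      linarith
    have hu2T : f2 T ≤ u2 := by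
      refine le_of_tendsto hf2T ?_
      filter_upwards [hev] with t ht
      have := (lt_min_iff.1 ht).2
      have := (lt_min_iff.1 this).2
      linarith
    have hφT := hTS.2
    simp only [hφ, min_le_iff] at hφT
    rcases hφT with (h | h) | (h | h)
    · have heq : f1 T = l1 := le_antisymm (by linarith) hl1T
      have hD := hl1 T hT0 heq hl2T hu2T
      have hloc := aux_lt_left_of_deriv_pos (hf1 T hT0) hD
      obtain ⟨t, ht1, ht2⟩ := (hloc.and hev).exists
      have := (lt_min_iff.1 ht2).1
      have := (lt_min_iff.1 this).1
      rw [heq] at ht1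
      linarith
    · have heq : f1 T = u1 := le_antisymm hu1T (by linarith)
      have hD := hu1 T hT0 heq hl2T hu2T
      have hloc := aux_gt_left_of_deriv_neg (hf1 T hT0) hD
      obtain ⟨t, ht1, ht2⟩ := (hloc.and hev).exists
      have := (lt_min_iff.1 ht2).1
      have := (lt_min_iff.1 this).2
      rw [heq] at ht1
      linarith
    · have heq : f2 T = l2 := le_antisymm (by linarith) hl2T
      have hD := hl2 T hT0 heq hl1T hu1T
      have hloc := aux_lt_left_of_deriv_pos (hf2 T hT0) hD
      obtain ⟨t, ht1, ht2⟩ := (hloc.and hev).exists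
      have := (lt_min_iff.1 ht2).2
      have := (lt_min_iff.1 this).1
      rw [heq] at ht1
      linarith
    · have heq : f2 T = u2 := le_antisymm hu2T (by linarith)
      have hD := hu2 T hT0 heq hl1T hu1T
      have hloc := aux_gt_left_of_deriv_neg (hf2 T hT0) hD
      obtain ⟨t, ht1, ht2⟩ := (hloc.and hev).exists
      have := (lt_min_iff.1 ht2).2
      have := (lt_min_iff.1 this).2
      rw [heq] at ht1
      linarith
  intro t ht
  have := key t ht
  simp only [hφ, lt_min_iff] at this
  exact ⟨by linarith [this.1.1], by linarith [this.1.2], by linarith [this.2.1],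
    by linarith [this.2.2]⟩

lemma aux_le_of_forall_pos {A b c : ℝ} (hc : 0 ≤ c) (h : ∀ ε > (0:ℝ), A ≤ b + c * ε) :
    A ≤ b := by
  refine le_of_forall_pos_le_add fun ε hε => ?_
  have h1 := h (ε / (c + 1)) (by positivity)
  have h2 : c * (ε / (c + 1)) ≤ ε := by
    rw [mul_div_assoc'] at *
    rw [div_le_iff₀ (by linarith : (0:ℝ) < c + 1)]
    nlinarith
  linarith

set_option maxHeartbeats 2000000 in
/-- every solution of `x' = g(x,0)` starting in the compact set
`B` converges, as `t → ∞`, to the unique nonnegative zero `p` of `g(·,0)`. -/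
theorem stmt_14
    (a q₁ c₁ d c₁M dM q₂ q₃ c₂ c₃ c₂M c₃M : ℝ)
    (ha : 0 < a) (hq₁ : 0 < q₁) (hc₁ : 0 < c₁) (hd : 0 < d)
    (hc₁M : 0 < c₁M) (hdM : 0 < dM)
    (hq₂ : 0 ≤ q₂) (hq₃ : 0 ≤ q₃) (hc₂ : 0 ≤ c₂) (hc₃ : 0 ≤ c₃)
    (hc₂M : 0 ≤ c₂M) (hc₃M : 0 ≤ c₃M)
    (g : ℝ × ℝ × ℝ → ℝ → ℝ × ℝ × ℝ)
    (hg : ∀ (x : ℝ × ℝ × ℝ) (i : ℝ), g x i =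
      (a * (1 - x.1) - (q₁ + q₂ * x.2.1 + q₃ * x.2.2) * x.1,
       c₁ / (1 + c₂ * x.2.1 + c₃ * x.2.2) * x.1 - d * x.2.1,
       c₁M / (1 + c₂M * x.2.1 + c₃M * x.2.2) * i - dM * x.2.2))
    (b₁ B₁ b₂ : ℝ)
    (hb₁ : b₁ = a / (a + q₁ + q₂ * (c₁ / d) + q₃ * (c₁M / dM)))
    (hB₁ : B₁ = a / (a + q₁))
    (hb₂ : b₂ = c₁ * b₁ / (d * (1 + c₂ * (c₁ / d) + c₃ * (c₁M / dM))))
    -- `p` is the unique zero of `g(·,0)` in `[0,∞)³`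
    (p : ℝ × ℝ × ℝ) (hp₀ : 0 ≤ p.1 ∧ 0 ≤ p.2.1 ∧ 0 ≤ p.2.2)
    (hpzero : g p 0 = 0)
    (hpuniq : ∀ y : ℝ × ℝ × ℝ, 0 ≤ y.1 → 0 ≤ y.2.1 → 0 ≤ y.2.2 →
      g y 0 = 0 → y = p)
    -- a solution of `x' = g(x,0)` on `[0,∞)` starting in `B`
    (x : ℝ → ℝ × ℝ × ℝ)
    (hx : ∀ t ≥ (0:ℝ), HasDerivAt x (g (x t) 0) t)
    (hx0 : x 0 ∈ Icc b₁ B₁ ×ˢ Icc b₂ (c₁ / d) ×ˢ Icc 0 (c₁M / dM)) :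
    Tendsto x atTop (nhds p) := by
  simp only [Set.mem_prod, Set.mem_Icc] at hx0
  obtain ⟨⟨hx01, hx02⟩, ⟨hx03, hx04⟩, hx05, hx06⟩ := hx0
  set F1 : ℝ → ℝ := fun t => (x t).1 with hF1
  set F2 : ℝ → ℝ := fun t => (x t).2.1 with hF2
  set F3 : ℝ → ℝ := fun t => (x t).2.2 with hF3
  set D1 : ℝ → ℝ := fun t => a * (1 - F1 t) - (q₁ + q₂ * F2 t + q₃ * F3 t) * F1 t with hD1def
  set D2 : ℝ → ℝ := fun t => c₁ / (1 + c₂ * F2 t + c₃ * F3 t) * F1 t - d * F2 t with hD2def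
  have hx01' : b₁ ≤ F1 0 := hx01
  have hx02' : F1 0 ≤ B₁ := hx02
  have hx03' : b₂ ≤ F2 0 := hx03
  have hx04' : F2 0 ≤ c₁ / d := hx04
  have hx05' : 0 ≤ F3 0 := hx05
  have hx06' : F3 0 ≤ c₁M / dM := hx06
  have hD1 : ∀ t ≥ (0:ℝ), HasDerivAt F1 (D1 t) t := by
    intro t ht
    have h := (hx t ht).fst
    rw [hg] at h
    exact h
  have hD2 : ∀ t ≥ (0:ℝ), HasDerivAt F2 (D2 t) t := by
    intro t ht
    have h := (hx t ht).snd.fst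
    rw [hg] at h
    exact h
  have hD3 : ∀ t ≥ (0:ℝ), HasDerivAt F3 (-(dM * F3 t)) t := by
    intro t ht
    have h := (hx t ht).snd.snd
    have e : (g (x t) 0).2.2 = -(dM * F3 t) := by rw [hg]; simp [hF3]
    rw [← e]; exact h
  -- explicit solution of the third component
  have hx3exp : ∀ b ≥ (0:ℝ), F3 b = F3 0 * exp (-(dM * b)) := by
    intro b hb
    have hzder : ∀ t ∈ Ico (0:ℝ) b, HasDerivWithinAt (fun s => F3 s * exp (dM * s)) 0 (Ici t) t := by
      intro t ht
      have he : HasDerivAt (fun s : ℝ => exp (dM * s)) (dM * exp (dM * t)) t := by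
        have := (Real.hasDerivAt_exp (dM * t)).comp t ((hasDerivAt_id t).const_mul dM)
        have e : dM * exp (dM * t) = exp (dM * t) * (dM * 1) := by ring
        rw [e]; exact this
      have hprod := (hD3 t ht.1).mul he
      have hzero : (-(dM * F3 t)) * exp (dM * t) + F3 t * (dM * exp (dM * t)) = 0 := by ring
      rw [hzero] at hprod
      exact hprod.hasDerivWithinAt
    have hzcont : ContinuousOn (fun s => F3 s * exp (dM * s)) (Icc 0 b) := by
      intro t ht
      exact (((hD3 t ht.1).continuousAt).mul
        ((Real.continuous_exp.comp (continuous_const.mul continuous_id)).continuousAt)).continuousWithinAt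
    have hz := constant_of_has_deriv_right_zero hzcont hzder b (right_mem_Icc.2 hb)
    have hz' : F3 b * exp (dM * b) = F3 0 := by simpa using hz
    rw [Real.exp_neg, eq_mul_inv_iff_mul_eq₀ (Real.exp_ne_zero _)]
    exact hz'
  have hx3bounds : ∀ t ≥ (0:ℝ), 0 ≤ F3 t ∧ F3 t ≤ c₁M / dM := by
    intro t ht
    rw [hx3exp t ht]
    constructor
    · exact mul_nonneg hx05' (exp_pos _).le
    · have h1 : exp (-(dM * t)) ≤ 1 := exp_le_one_iff.2 (by nlinarith)
      nlinarith [exp_pos (-(dM * t))]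
  have hx3tend : Tendsto F3 atTop (𝓝 0) := by
    have h1 : Tendsto (fun t : ℝ => -(dM * t)) atTop atBot := by
      have h0 : Tendsto (fun t : ℝ => dM * t) atTop atTop :=
        Tendsto.const_mul_atTop hdM tendsto_id
      exact tendsto_neg_atTop_atBot.comp h0
    have h2 : Tendsto (fun t : ℝ => F3 0 * exp (-(dM * t))) atTop (𝓝 (F3 0 * 0)) :=
      (Real.tendsto_exp_atBot.comp h1).const_mul (F3 0)
    rw [mul_zero] at h2
    exact Tendsto.congr'
      (by filter_upwards [eventually_ge_atTop (0:ℝ)] with t ht; exact (hx3exp t ht).symm) h2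
  -- positivity of the initial-box constants
  have hc₁d : 0 < c₁ / d := div_pos hc₁ hd
  have hMdM : 0 < c₁M / dM := div_pos hc₁M hdM
  have hdenpos : 0 < a + q₁ + q₂ * (c₁ / d) + q₃ * (c₁M / dM) := by
    have := mul_nonneg hq₂ hc₁d.le
    have := mul_nonneg hq₃ hMdM.le
    linarith
  have hb₁pos : 0 < b₁ := by rw [hb₁]; positivity
  have hb₂pos : 0 < b₂ := by
    rw [hb₂]
    have h1 : 0 < 1 + c₂ * (c₁ / d) + c₃ * (c₁M / dM) := by
      have := mul_nonneg hc₂ hc₁d.le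
      have := mul_nonneg hc₃ hMdM.le
      linarith
    positivity
  set M₃ : ℝ := c₁M / dM with hM₃
  set M₂ : ℝ := 2 * (c₁ / d) with hM₂
  have hM₂pos : 0 < M₂ := by rw [hM₂]; positivity
  set K : ℝ := a + q₁ + q₂ * M₂ + q₃ * M₃ with hK
  have hKpos : 0 < K := by
    rw [hK]
    have := mul_nonneg hq₂ hM₂pos.le
    have := mul_nonneg hq₃ hMdM.le
    linarith
  set l1 : ℝ := a / (2 * K) with hl1def
  have hl1pos : 0 < l1 := by rw [hl1def]; positivity
  -- forward invariance of the open box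
  have hinv : ∀ t ≥ (0:ℝ), l1 < F1 t ∧ F1 t < 1 ∧ 0 < F2 t ∧ F2 t < M₂ := by
    apply aux_invariance hD1 hD2
    · -- l1 < F1 0
      have hlt : l1 < b₁ := by
        rw [hl1def, hb₁]
        apply div_lt_div_of_pos_left ha hdenpos
        rw [hK, hM₂, hM₃]
        nlinarith [mul_nonneg hq₂ hc₁d.le, mul_nonneg hq₃ hMdM.le]
      linarith
    · -- F1 0 < 1
      have : B₁ < 1 := by
        rw [hB₁, div_lt_one (by linarith)]
        linarith
      linarith
    · linarith
    · -- F2 0 < M₂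
      have : c₁ / d < M₂ := by rw [hM₂]; linarith
      linarith
    · -- lower barrier for F1
      intro t ht heq h2l h2u
      have h3 := hx3bounds t ht
      have hKb : q₁ + q₂ * F2 t + q₃ * F3 t ≤ K - a := by
        rw [hK]
        nlinarith [mul_nonneg hq₂ h2l, mul_nonneg hq₃ h3.1,
          mul_le_mul_of_nonneg_left h2u hq₂, mul_le_mul_of_nonneg_left h3.2 hq₃]
      have hKl1 : K * l1 = a / 2 := by
        rw [hl1def]; field_simp
      simp only [hD1def]
      rw [heq]
      nlinarith [mul_le_mul_of_nonneg_right hKb hl1pos.le]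
    · -- upper barrier for F1
      intro t ht heq h2l h2u
      have h3 := hx3bounds t ht
      simp only [hD1def]
      rw [heq]
      nlinarith [mul_nonneg hq₂ h2l, mul_nonneg hq₃ h3.1]
    · -- lower barrier for F2
      intro t ht heq h1l h1u
      have h3 := hx3bounds t ht
      simp only [hD2def]
      rw [heq]
      have hden : 0 < 1 + c₂ * 0 + c₃ * F3 t := by nlinarith [mul_nonneg hc₃ h3.1]
      have hpos : 0 < c₁ / (1 + c₂ * 0 + c₃ * F3 t) := div_pos hc₁ hden
      nlinarith [mul_pos hpos (lt_of_lt_of_le hl1pos h1l)]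
    · -- upper barrier for F2
      intro t ht heq h1l h1u
      have h3 := hx3bounds t ht
      simp only [hD2def]
      rw [heq]
      have hden1 : 1 ≤ 1 + c₂ * M₂ + c₃ * F3 t := by
        nlinarith [mul_nonneg hc₂ hM₂pos.le, mul_nonneg hc₃ h3.1]
      have h4 : c₁ / (1 + c₂ * M₂ + c₃ * F3 t) ≤ c₁ := div_le_self hc₁.le hden1
      have h5 : 0 ≤ c₁ / (1 + c₂ * M₂ + c₃ * F3 t) := div_nonneg hc₁.le (by linarith)
      have h6 : c₁ / (1 + c₂ * M₂ + c₃ * F3 t) * F1 t ≤ c₁ := by nlinarith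
      have h7 : d * M₂ = 2 * c₁ := by rw [hM₂]; field_simp
      linarith
  -- boundedness of the first two components
  have hevge : ∀ᶠ t in atTop, (0:ℝ) ≤ t := eventually_ge_atTop 0
  have hbdd1u : IsBoundedUnder (· ≤ ·) atTop F1 :=
    isBoundedUnder_of_eventually_le (hevge.mono fun t ht => ((hinv t ht).2.1).le)
  have hbdd1l : IsBoundedUnder (· ≥ ·) atTop F1 :=
    isBoundedUnder_of_eventually_ge (hevge.mono fun t ht => ((hinv t ht).1).le)
  have hbdd2u : IsBoundedUnder (· ≤ ·) atTop F2 :=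
    isBoundedUnder_of_eventually_le (hevge.mono fun t ht => ((hinv t ht).2.2.2).le)
  have hbdd2l : IsBoundedUnder (· ≥ ·) atTop F2 :=
    isBoundedUnder_of_eventually_ge (hevge.mono fun t ht => ((hinv t ht).2.2.1).le)
  set su : ℝ := limsup F1 atTop with hsu
  set sl : ℝ := liminf F1 atTop with hsl
  set vu : ℝ := limsup F2 atTop with hvu
  set vl : ℝ := liminf F2 atTop with hvl
  have hsls : sl ≤ su := liminf_le_limsup hbdd1u hbdd1l
  have hvls : vl ≤ vu := liminf_le_limsup hbdd2u hbdd2l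
  have hsl_ge : l1 ≤ sl :=
    le_liminf_of_le hbdd1u.isCoboundedUnder_ge (hevge.mono fun t ht => ((hinv t ht).1).le)
  have hvl_ge : (0:ℝ) ≤ vl :=
    le_liminf_of_le hbdd2u.isCoboundedUnder_ge (hevge.mono fun t ht => ((hinv t ht).2.2.1).le)
  have hsl_pos : 0 < sl := lt_of_lt_of_le hl1pos hsl_ge
  have hsu_pos : 0 < su := lt_of_lt_of_le hsl_pos hsls
  -- eventual bounds
  have hF1lt : ∀ ε > (0:ℝ), ∀ᶠ t in atTop, F1 t < su + ε := fun ε hε =>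
    eventually_lt_of_limsup_lt (by linarith) hbdd1u
  have hF1gt : ∀ ε > (0:ℝ), ∀ᶠ t in atTop, sl - ε < F1 t := fun ε hε =>
    eventually_lt_of_lt_liminf (by linarith) hbdd1l
  have hF2lt : ∀ ε > (0:ℝ), ∀ᶠ t in atTop, F2 t < vu + ε := fun ε hε =>
    eventually_lt_of_limsup_lt (by linarith) hbdd2u
  have hF2gt : ∀ ε > (0:ℝ), ∀ᶠ t in atTop, vl - ε < F2 t := fun ε hε =>
    eventually_lt_of_lt_liminf (by linarith) hbdd2l
  -- relation from F2 at its limsup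
  have rel3 : d * vu * (1 + c₂ * vu) ≤ c₁ * su := by
    obtain ⟨u, hutop, huf, huD, hupos⟩ := aux_fluct_seq_limsup hD2 hbdd2u hbdd2l
    have hF3u : Tendsto (fun n => F3 (u n)) atTop (𝓝 0) := hx3tend.comp hutop
    have heq : ∀ n, c₁ * F1 (u n) =
        (D2 (u n) + d * F2 (u n)) * (1 + c₂ * F2 (u n) + c₃ * F3 (u n)) := by
      intro n
      have h2 := (hinv (u n) (hupos n)).2.2.1
      have h3 := (hx3bounds (u n) (hupos n)).1
      have hden : (0:ℝ) < 1 + c₂ * F2 (u n) + c₃ * F3 (u n) := by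
        linarith [mul_nonneg hc₂ h2.le, mul_nonneg hc₃ h3]
      simp only [hD2def]
      field_simp
      ring
    have hlim : Tendsto (fun n => (D2 (u n) + d * F2 (u n)) * (1 + c₂ * F2 (u n) + c₃ * F3 (u n)))
        atTop (𝓝 ((0 + d * vu) * (1 + c₂ * vu + c₃ * 0))) :=
      (huD.add (huf.const_mul d)).mul
        ((tendsto_const_nhds.add (huf.const_mul c₂)).add (hF3u.const_mul c₃))
    have hlim2 : Tendsto (fun n => c₁ * F1 (u n)) atTop (𝓝 (d * vu * (1 + c₂ * vu))) := by
      have heq2 : (fun n => c₁ * F1 (u n)) =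
          fun n => (D2 (u n) + d * F2 (u n)) * (1 + c₂ * F2 (u n) + c₃ * F3 (u n)) := funext heq
      rw [heq2]
      convert hlim using 2
      ring
    refine aux_le_of_forall_pos hc₁.le fun ε hε => ?_
    have hev : ∀ᶠ n in atTop, c₁ * F1 (u n) ≤ c₁ * su + c₁ * ε := by
      filter_upwards [hutop.eventually (hF1lt ε hε)] with n hn
      have := mul_le_mul_of_nonneg_left hn.le hc₁.le
      linarith
    exact le_of_tendsto hlim2 hev
  -- relation from F2 at its liminf
  have rel4 : c₁ * sl ≤ d * vl * (1 + c₂ * vl) := by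
    obtain ⟨u, hutop, huf, huD, hupos⟩ := aux_fluct_seq_liminf hD2 hbdd2u hbdd2l
    have hF3u : Tendsto (fun n => F3 (u n)) atTop (𝓝 0) := hx3tend.comp hutop
    have heq : ∀ n, c₁ * F1 (u n) =
        (D2 (u n) + d * F2 (u n)) * (1 + c₂ * F2 (u n) + c₃ * F3 (u n)) := by
      intro n
      have h2 := (hinv (u n) (hupos n)).2.2.1
      have h3 := (hx3bounds (u n) (hupos n)).1
      have hden : (0:ℝ) < 1 + c₂ * F2 (u n) + c₃ * F3 (u n) := by
        linarith [mul_nonneg hc₂ h2.le, mul_nonneg hc₃ h3]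
      simp only [hD2def]
      field_simp
      ring
    have hlim : Tendsto (fun n => (D2 (u n) + d * F2 (u n)) * (1 + c₂ * F2 (u n) + c₃ * F3 (u n)))
        atTop (𝓝 ((0 + d * vl) * (1 + c₂ * vl + c₃ * 0))) :=
      (huD.add (huf.const_mul d)).mul
        ((tendsto_const_nhds.add (huf.const_mul c₂)).add (hF3u.const_mul c₃))
    have hlim2 : Tendsto (fun n => c₁ * F1 (u n)) atTop (𝓝 (d * vl * (1 + c₂ * vl))) := by
      have heq2 : (fun n => c₁ * F1 (u n)) =
          fun n => (D2 (u n) + d * F2 (u n)) * (1 + c₂ * F2 (u n) + c₃ * F3 (u n)) := funext heq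
      rw [heq2]
      convert hlim using 2
      ring
    refine aux_le_of_forall_pos hc₁.le fun ε hε => ?_
    have hev : ∀ᶠ n in atTop, c₁ * sl - c₁ * ε ≤ c₁ * F1 (u n) := by
      filter_upwards [hutop.eventually (hF1gt ε hε)] with n hn
      have := mul_le_mul_of_nonneg_left hn.le hc₁.le
      linarith
    have := ge_of_tendsto hlim2 hev
    linarith
  -- relation from F1 at its limsup
  have rel1 : (a + q₁ + q₂ * vl) * su ≤ a := by
    obtain ⟨u, hutop, huf, huD, hupos⟩ := aux_fluct_seq_limsup hD1 hbdd1u hbdd1l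
    have hlim : Tendsto (fun n => a - D1 (u n)) atTop (𝓝 a) := by
      have := (tendsto_const_nhds (x := a)).sub huD
      simpa using this
    refine aux_le_of_forall_pos (mul_nonneg hq₂ hsu_pos.le) fun ε hε => ?_
    have hlhs : Tendsto (fun n => (a + q₁ + q₂ * (vl - ε)) * F1 (u n)) atTop
        (𝓝 ((a + q₁ + q₂ * (vl - ε)) * su)) := huf.const_mul _
    have hev : ∀ᶠ n in atTop, (a + q₁ + q₂ * (vl - ε)) * F1 (u n) ≤ a - D1 (u n) := by
      filter_upwards [hutop.eventually (hF2gt ε hε), hutop.eventually hevge] with n h2 h0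
      have h1 := (hinv (u n) h0).1
      have h3 := (hx3bounds (u n) h0).1
      have hF1n : 0 ≤ F1 (u n) := le_trans hl1pos.le h1.le
      simp only [hD1def]
      linarith [mul_nonneg (mul_nonneg hq₃ h3) hF1n,
        mul_nonneg (mul_nonneg hq₂ (by linarith : (0:ℝ) ≤ F2 (u n) - (vl - ε))) hF1n]
    have hfin := le_of_tendsto_of_tendsto hlhs hlim hev
    linarith [hfin]
  -- relation from F1 at its liminf
  have rel2 : a ≤ (a + q₁ + q₂ * vu) * sl := by
    obtain ⟨u, hutop, huf, huD, hupos⟩ := aux_fluct_seq_liminf hD1 hbdd1u hbdd1l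
    have hF3u : Tendsto (fun n => F3 (u n)) atTop (𝓝 0) := hx3tend.comp hutop
    have hlim : Tendsto (fun n => a - D1 (u n)) atTop (𝓝 a) := by
      have := (tendsto_const_nhds (x := a)).sub huD
      simpa using this
    refine aux_le_of_forall_pos (mul_nonneg (by linarith : (0:ℝ) ≤ q₂ + q₃) hsl_pos.le)
      fun ε hε => ?_
    have hrhs : Tendsto (fun n => (a + q₁ + q₂ * (vu + ε) + q₃ * ε) * F1 (u n)) atTop
        (𝓝 ((a + q₁ + q₂ * (vu + ε) + q₃ * ε) * sl)) := huf.const_mul _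
    have hF3small : ∀ᶠ n in atTop, F3 (u n) < ε := hF3u.eventually (eventually_lt_nhds hε)
    have hev : ∀ᶠ n in atTop, a - D1 (u n) ≤ (a + q₁ + q₂ * (vu + ε) + q₃ * ε) * F1 (u n) := by
      filter_upwards [hutop.eventually (hF2lt ε hε), hutop.eventually hevge, hF3small]
        with n h2 h0 h3s
      have h1 := (hinv (u n) h0).1
      have hF1n : 0 ≤ F1 (u n) := le_trans hl1pos.le h1.le
      simp only [hD1def]
      linarith [mul_nonneg (mul_nonneg hq₃ (by linarith : (0:ℝ) ≤ ε - F3 (u n))) hF1n,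
        mul_nonneg (mul_nonneg hq₂ (by linarith : (0:ℝ) ≤ vu + ε - F2 (u n))) hF1n]
    have hfin := le_of_tendsto_of_tendsto hlim hrhs hev
    linarith [hfin]
  -- the fluctuation relations force the limits to coincide
  have hA : 0 < a + q₁ := by linarith
  have hvu0 : 0 ≤ vu := le_trans hvl_ge hvls
  have hvu_le_vl : vu ≤ vl := by
    have hcl : 0 ≤ a + q₁ + q₂ * vl := by linarith [mul_nonneg hq₂ hvl_ge]
    have hcu : 0 ≤ a + q₁ + q₂ * vu := by linarith [mul_nonneg hq₂ hvu0]
    have h5 : d * vu * (1 + c₂ * vu) * (a + q₁ + q₂ * vl) ≤ c₁ * a := by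
      have h51 := mul_le_mul_of_nonneg_right rel3 hcl
      have h52 := mul_le_mul_of_nonneg_left rel1 hc₁.le
      linarith [h51, h52]
    have h6 : c₁ * a ≤ d * vl * (1 + c₂ * vl) * (a + q₁ + q₂ * vu) := by
      have h61 := mul_le_mul_of_nonneg_right rel4 hcu
      have h62 := mul_le_mul_of_nonneg_left rel2 hc₁.le
      linarith [h61, h62]
    by_contra hcon
    push_neg at hcon
    have t1 : 0 < d * ((a + q₁) * (vu - vl)) :=
      mul_pos hd (mul_pos hA (by linarith))
    have t2 : 0 ≤ d * (c₂ * ((a + q₁) * ((vu - vl) * (vu + vl)))) :=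
      mul_nonneg hd.le (mul_nonneg hc₂ (mul_nonneg hA.le
        (mul_nonneg (by linarith) (by linarith))))
    have t3 : 0 ≤ d * (c₂ * (q₂ * (vl * vu * (vu - vl)))) :=
      mul_nonneg hd.le (mul_nonneg hc₂ (mul_nonneg hq₂
        (mul_nonneg (mul_nonneg hvl_ge hvu0) (by linarith))))
    linarith [h5, h6, t1, t2, t3]
  have hveq : vu = vl := le_antisymm hvu_le_vl hvls
  have hsu_le_sl : su ≤ sl := by
    have hposc : 0 < a + q₁ + q₂ * vl := by linarith [mul_nonneg hq₂ hvl_ge]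
    rw [hveq] at rel2
    exact le_of_mul_le_mul_left (le_trans rel1 rel2) hposc
  have hseq : su = sl := le_antisymm hsu_le_sl hsls
  have hsval : (a + q₁ + q₂ * vl) * sl = a := by
    rw [hveq] at rel2
    rw [hseq] at rel1
    exact le_antisymm rel1 rel2
  have hvval : c₁ * sl = d * vl * (1 + c₂ * vl) := by
    rw [hveq, hseq] at rel3
    exact le_antisymm rel4 rel3
  -- convergence of each component
  have hF1tend : Tendsto F1 atTop (𝓝 sl) :=
    tendsto_of_le_liminf_of_limsup_le (le_of_eq hsl) (le_of_eq (hsu.symm.trans hseq))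
      hbdd1u hbdd1l
  have hF2tend : Tendsto F2 atTop (𝓝 vl) :=
    tendsto_of_le_liminf_of_limsup_le (le_of_eq hvl) (le_of_eq (hvu.symm.trans hveq))
      hbdd2u hbdd2l
  have hxt : Tendsto x atTop (𝓝 (sl, vl, (0:ℝ))) :=
    hF1tend.prodMk_nhds (hF2tend.prodMk_nhds hx3tend)
  -- the limit is a nonnegative zero of the field, hence `p`
  have hLp : ((sl, vl, (0:ℝ)) : ℝ × ℝ × ℝ) = p := by
    apply hpuniq
    · exact hsl_pos.le
    · exact hvl_ge
    · exact le_refl 0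
    · rw [hg]
      have hden : (0:ℝ) < 1 + c₂ * vl + c₃ * 0 := by
        have := mul_nonneg hc₂ hvl_ge
        linarith
      have h1 : a * (1 - sl) - (q₁ + q₂ * vl + q₃ * 0) * sl = 0 := by linarith [hsval]
      have h2 : c₁ / (1 + c₂ * vl + c₃ * 0) * sl - d * vl = 0 := by
        rw [sub_eq_zero, div_mul_eq_mul_div, div_eq_iff hden.ne']
        linarith [hvval]
      have h3 : c₁M / (1 + c₂M * vl + c₃M * 0) * 0 - dM * 0 = 0 := by ring
      show (a * (1 - sl) - (q₁ + q₂ * vl + q₃ * 0) * sl,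
            c₁ / (1 + c₂ * vl + c₃ * 0) * sl - d * vl,
            c₁M / (1 + c₂M * vl + c₃M * 0) * 0 - dM * 0) = 0
      rw [h1, h2, h3]
      rfl
  rwa [hLp] at hxt
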